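/- Every group G is a direct product E × H of an elementary abelian 2-group E and a group H which has no direct factor of order 2. Moreover, if G = E₁ × H₁ is another such decomposition of G, then E₁ ≅ E and H₁ ≅ H. -/

import Mathlib

/-- An elementary abelian 2-group: abelian with every element of order at most 2. -/
def IsElemAb2 (E : Type*) [Group E] : Prop :=
  (∀ x : E, x ^ 2 = 1) ∧ ∀ x y : E, x * y = y * x

/-- `G` is the (internal) direct product of its subgroups `E` and `H`. -/
def IsDirectProdDecomp {G : Type*} [Group G] (E H : Subgroup G) : Prop :=
  E.Normal ∧ H.Normal ∧ Disjoint E H ∧ E ⊔ H = ⊤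

/-- `H` has a direct factor of order 2. -/
def HasC2DirectFactor (H : Type*) [Group H] : Prop :=
  ∃ C K : Subgroup H, IsDirectProdDecomp C K ∧ Nat.card C = 2

namespace C2FreeAux

variable {G : Type*} [Group G]

/-- The subgroup generated by all squares. -/
def Sq (G : Type*) [Group G] : Subgroup G := Subgroup.closure {x : G | ∃ g : G, g ^ 2 = x}

lemma sq_mem (g : G) : g ^ 2 ∈ Sq G := Subgroup.subset_closure ⟨g, rfl⟩

lemma sq_le {K : Subgroup G} (h : ∀ g : G, g ^ 2 ∈ K) : Sq G ≤ K :=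
  (Subgroup.closure_le K).2 (by rintro x ⟨g, rfl⟩; exact h g)

instance Sq_normal : (Sq G).Normal := by
  constructor
  intro n hn g
  induction hn using Subgroup.closure_induction with
  | mem x hx =>
      obtain ⟨y, rfl⟩ := hx
      refine Subgroup.subset_closure ⟨g * y * g⁻¹, ?_⟩
      simp [pow_two, mul_assoc]
  | one => simpa using (Sq G).one_mem
  | mul x y hx hy ihx ihy =>
      have h : g * (x * y) * g⁻¹ = (g * x * g⁻¹) * (g * y * g⁻¹) := by group
      rw [h]; exact mul_mem ihx ihy
  | inv x hx ih =>
      have h : g * x⁻¹ * g⁻¹ = (g * x * g⁻¹)⁻¹ := by group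
      rw [h]; exact inv_mem ih

lemma comm_of_sq_one {P : Type*} [Group P] (h : ∀ x : P, x ^ 2 = 1) (x y : P) :
    x * y = y * x := by
  have inv_eq : ∀ z : P, z⁻¹ = z := by
    intro z
    have hz : z * z = 1 := by rw [← pow_two]; exact h z
    exact inv_eq_of_mul_eq_one_right hz
  calc x * y = (x * y)⁻¹ := (inv_eq _).symm
    _ = y⁻¹ * x⁻¹ := mul_inv_rev x y
    _ = y * x := by rw [inv_eq, inv_eq]

lemma normal_all {P : Type*} [Group P] (hc : ∀ x y : P, x * y = y * x) (A : Subgroup P) :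
    A.Normal := by
  constructor
  intro n hn g
  have h : g * n * g⁻¹ = n := by rw [hc g n]; group
  rw [h]; exact hn

lemma zpow_pair {P : Type*} [Group P] {x : P} (hx : x ^ 2 = 1) (k : ℤ) :
    x ^ k = 1 ∨ x ^ k = x := by
  have h2 : x ^ (2 : ℤ) = 1 := by rw [show ((2:ℤ)) = ((2:ℕ):ℤ) by norm_num, zpow_natCast, hx]
  have hk : x ^ k = x ^ (k % 2) := by
    conv_lhs => rw [← Int.emod_add_mul_ediv k 2]
    rw [zpow_add, zpow_mul, h2, one_zpow, mul_one]
  rcases Int.emod_two_eq_zero_or_one k with h | h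
  · left; rw [hk, h, zpow_zero]
  · right; rw [hk, h, zpow_one]

lemma zpowers_cases {P : Type*} [Group P] {x y : P} (hx : x ^ 2 = 1)
    (hy : y ∈ Subgroup.zpowers x) : y = 1 ∨ y = x := by
  obtain ⟨k, hk⟩ := hy
  have hk : x ^ k = y := hk
  rcases zpow_pair hx k with h | h
  · left; rw [← hk, h]
  · right; rw [← hk, h]

lemma mem_mul_decomp {A B : Subgroup G} (hB : B.Normal) (h : A ⊔ B = ⊤) (g : G) :
    ∃ a ∈ A, ∃ b ∈ B, a * b = g := by
  haveI := hB
  have hg : g ∈ (↑(A ⊔ B) : Set G) := by simp [h]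
  rw [Subgroup.mul_normal] at hg
  exact Set.mem_mul.1 hg

/-- Zorn: in a group of exponent 2, every subgroup has a complement. -/
lemma exists_compl {P : Type*} [Group P] (hP : ∀ x : P, x ^ 2 = 1) (W : Subgroup P) :
    ∃ E : Subgroup P, E ⊓ W = ⊥ ∧ E ⊔ W = ⊤ := by
  have hc := comm_of_sq_one hP
  obtain ⟨E, -, hmax⟩ := zorn_le_nonempty₀ {E : Subgroup P | E ⊓ W = ⊥}
    (fun c hcs hchain y hy => by
      refine ⟨sSup c, ?_, fun z hz => le_sSup hz⟩
      rw [Set.mem_setOf_eq, eq_bot_iff]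
      intro x hx
      rw [Subgroup.mem_inf] at hx
      obtain ⟨s, hs, hxs⟩ := (Subgroup.mem_sSup_of_directedOn ⟨y, hy⟩ hchain.directedOn).1 hx.1
      have hxs' : x ∈ s ⊓ W := Subgroup.mem_inf.2 ⟨hxs, hx.2⟩
      rwa [hcs hs] at hxs') ⊥ (by simp)
  refine ⟨E, hmax.prop, ?_⟩
  by_contra hne
  obtain ⟨x, -, hx⟩ := SetLike.exists_of_lt (lt_top_iff_ne_top.2 hne : E ⊔ W < ⊤)
  haveI : (Subgroup.zpowers x).Normal := normal_all hc _
  have hE' : (E ⊔ Subgroup.zpowers x) ⊓ W = ⊥ := by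
    rw [eq_bot_iff]
    intro y hy
    rw [Subgroup.mem_inf] at hy
    obtain ⟨hy1, hy2⟩ := hy
    have hy1' : y ∈ (↑(E ⊔ Subgroup.zpowers x) : Set P) := hy1
    rw [Subgroup.mul_normal] at hy1'
    obtain ⟨e, he, z, hz, hEq⟩ := Set.mem_mul.1 hy1'
    have he' : e ∈ E := he
    have hz' : z ∈ Subgroup.zpowers x := hz
    rcases zpowers_cases (hP x) hz' with h | h
    · rw [h, mul_one] at hEq
      have hm : y ∈ E ⊓ W := Subgroup.mem_inf.2 ⟨hEq ▸ he', hy2⟩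
      rwa [hmax.prop] at hm
    · rw [h] at hEq
      exfalso; apply hx
      have hxe : x = e⁻¹ * y := by rw [← hEq]; group
      rw [hxe]
      exact mul_mem (inv_mem ((le_sup_left : E ≤ E ⊔ W) he'))
        ((le_sup_right : W ≤ E ⊔ W) hy2)
  have hle : E ⊔ Subgroup.zpowers x ≤ E := hmax.2 hE' le_sup_left
  exact hx ((le_sup_left : E ≤ E ⊔ W)
    (hle ((le_sup_right : Subgroup.zpowers x ≤ _) (Subgroup.mem_zpowers x))))

/-- If `H` has no `C₂` direct factor, then every central involution is a product of squares. -/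
lemma mem_sq_of_no_c2 {H : Type*} [Group H] (hno : ¬ HasC2DirectFactor H) {z : H}
    (hz : z ∈ Subgroup.center H) (hz2 : z ^ 2 = 1) : z ∈ Sq H := by
  by_contra hzS
  apply hno
  have hQsq : ∀ x : H ⧸ Sq H, x ^ 2 = 1 := by
    intro x
    refine QuotientGroup.induction_on x fun g => ?_
    have : ((g : H ⧸ Sq H)) ^ 2 = ((g ^ 2 : H) : H ⧸ Sq H) := rfl
    rw [this, QuotientGroup.eq_one_iff]
    exact sq_mem g
  set π := QuotientGroup.mk' (Sq H) with hπ
  obtain ⟨Kb, hmeet, hjoin⟩ := exists_compl hQsq (Subgroup.zpowers (π z))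
  haveI hKbn : Kb.Normal := normal_all (comm_of_sq_one hQsq) Kb
  have hz1 : z ≠ 1 := fun h => hzS (h ▸ (Sq H).one_mem)
  refine ⟨Subgroup.zpowers z, Kb.comap π, ⟨?_, hKbn.comap π, ?_, ?_⟩, ?_⟩
  · constructor
    intro n hn g
    obtain ⟨k, rfl⟩ := hn
    have hcen : z ^ k ∈ Subgroup.center H := Subgroup.zpow_mem _ hz k
    have : g * z ^ k * g⁻¹ = z ^ k := by
      rw [Subgroup.mem_center_iff] at hcen
      rw [hcen g]; group
    rw [this]
    exact Subgroup.zpow_mem _ (Subgroup.mem_zpowers z) k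
  · rw [disjoint_iff, eq_bot_iff]
    intro w hw
    rw [Subgroup.mem_inf] at hw
    obtain ⟨hw1, hw2⟩ := hw
    rcases zpowers_cases hz2 hw1 with h | h
    · rw [h]; exact Subgroup.mem_bot.2 rfl
    · exfalso
      rw [h] at hw2
      rw [Subgroup.mem_comap] at hw2
      have hm : π z ∈ Kb ⊓ Subgroup.zpowers (π z) :=
        Subgroup.mem_inf.2 ⟨hw2, Subgroup.mem_zpowers _⟩
      rw [hmeet, Subgroup.mem_bot] at hm
      exact hzS ((QuotientGroup.eq_one_iff z).1 hm)
  · rw [eq_top_iff]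
    intro g _
    have hg : π g ∈ (↑(Kb ⊔ Subgroup.zpowers (π z)) : Set (H ⧸ Sq H)) := by simp [hjoin]
    haveI : (Subgroup.zpowers (π z)).Normal := normal_all (comm_of_sq_one hQsq) _
    rw [Subgroup.mul_normal] at hg
    obtain ⟨a, ha, b, hb, hEq⟩ := Set.mem_mul.1 hg
    obtain ⟨k, hk⟩ := hb
    have hk : (π z) ^ k = b := hk
    have h1 : g * (z ^ k)⁻¹ ∈ Kb.comap π := by
      rw [Subgroup.mem_comap, map_mul, map_inv, map_zpow]
      have hpa : π g * ((π z) ^ k)⁻¹ = a := by rw [hk, ← hEq]; group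
      rw [hpa]; exact ha
    have h2 : (g * (z ^ k)⁻¹) * z ^ k = g := by group
    rw [← h2]
    exact mul_mem ((le_sup_right : Kb.comap π ≤ _) h1)
      ((le_sup_left : Subgroup.zpowers z ≤ _) (Subgroup.zpow_mem _ (Subgroup.mem_zpowers z) k))
  · rw [Nat.card_zpowers]
    haveI : Fact (Nat.Prime 2) := ⟨Nat.prime_two⟩
    exact orderOf_eq_prime hz2 hz1

/-- Conversely: if every central involution is a product of squares then no `C₂` factor. -/
lemma no_c2 {H : Type*} [Group H]
    (hc : ∀ z ∈ Subgroup.center H, z ^ 2 = 1 → z ∈ Sq H) : ¬ HasC2DirectFactor H := by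
  rintro ⟨C, K, ⟨hCn, hKn, hdisj, hsup⟩, hcard⟩
  haveI : Finite ↥C := Nat.finite_of_card_ne_zero (by omega)
  rcases C.bot_or_exists_ne_one with hC | ⟨z, hzC, hz1⟩
  · rw [hC] at hcard; simp at hcard
  have hpow : ∀ c (hcC : c ∈ C), c ^ 2 = 1 := by
    intro c hcC
    have h := pow_card_eq_one' (x := (⟨c, hcC⟩ : ↥C))
    rw [hcard] at h
    simpa using congrArg Subtype.val h
  have hz2 : z ^ 2 = 1 := hpow z hzC
  haveI : Fact (Nat.Prime 2) := ⟨Nat.prime_two⟩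
  haveI : IsCyclic ↥C := isCyclic_of_prime_card hcard
  letI : CommGroup ↥C := IsCyclic.commGroup
  have hCcomm : ∀ c ∈ C, z * c = c * z := by
    intro c hcC
    simpa using congrArg Subtype.val (mul_comm (⟨z, hzC⟩ : ↥C) ⟨c, hcC⟩)
  have hKcomm : ∀ k ∈ K, z * k = k * z :=
    fun k hk => Subgroup.commute_of_normal_of_disjoint C K hCn hKn hdisj z k hzC hk
  have hzc : z ∈ Subgroup.center H := by
    rw [Subgroup.mem_center_iff]
    intro g
    obtain ⟨c, hcC, k, hkK, rfl⟩ := mem_mul_decomp hKn hsup g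
    calc c * k * z = c * (z * k) := by rw [mul_assoc, ← hKcomm k hkK]
      _ = (c * z) * k := by rw [mul_assoc]
      _ = (z * c) * k := by rw [← hCcomm c hcC]
      _ = z * (c * k) := by rw [mul_assoc]
  have hSqK : Sq H ≤ K := by
    apply sq_le
    intro g
    obtain ⟨c, hcC, k, hkK, rfl⟩ := mem_mul_decomp hKn hsup g
    have hck : c * k = k * c :=
      Subgroup.commute_of_normal_of_disjoint C K hCn hKn hdisj c k hcC hkK
    have h : (c * k) ^ 2 = k ^ 2 := by
      calc (c * k) ^ 2 = c * (k * c) * k := by rw [pow_two]; group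
        _ = c * (c * k) * k := by rw [← hck]
        _ = c ^ 2 * k ^ 2 := by rw [pow_two, pow_two]; group
        _ = k ^ 2 := by rw [hpow c hcC, one_mul]
    rw [h]
    exact K.pow_mem hkK 2
  have hzK : z ∈ C ⊓ K := Subgroup.mem_inf.2 ⟨hzC, hSqK (hc z hzc hz2)⟩
  rw [disjoint_iff.1 hdisj, Subgroup.mem_bot] at hzK
  exact hz1 hzK

/-- A subgroup having trivial meet and full join with a normal `N` is isomorphic to `G⧸N`. -/
lemma equiv_quot {A N : Subgroup G} (hN : N.Normal) (hmeet : A ⊓ N = ⊥)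
    (hjoin : A ⊔ N = ⊤) : Nonempty (↥A ≃* G ⧸ N) := by
  haveI := hN
  refine ⟨MulEquiv.ofBijective ((QuotientGroup.mk' N).comp A.subtype) ⟨?_, ?_⟩⟩
  · rw [← MonoidHom.ker_eq_bot_iff, eq_bot_iff]
    intro a ha
    rw [MonoidHom.mem_ker] at ha
    have h1 : (a : G) ∈ N := (QuotientGroup.eq_one_iff _).1 ha
    have h2 : (a : G) ∈ A ⊓ N := Subgroup.mem_inf.2 ⟨a.2, h1⟩
    rw [hmeet, Subgroup.mem_bot] at h2
    rw [Subgroup.mem_bot]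
    exact Subtype.ext h2
  · intro q
    refine QuotientGroup.induction_on q fun g => ?_
    obtain ⟨a, haA, n, hnN, rfl⟩ := mem_mul_decomp hN hjoin g
    refine ⟨⟨a, haA⟩, ?_⟩
    show QuotientGroup.mk a = QuotientGroup.mk (a * n)
    rw [QuotientGroup.eq]
    simpa using hnN

lemma equiv_of_compl {A B N : Subgroup G} (hN : N.Normal) (hA1 : A ⊓ N = ⊥)
    (hA2 : A ⊔ N = ⊤) (hB1 : B ⊓ N = ⊥) (hB2 : B ⊔ N = ⊤) : Nonempty (↥A ≃* ↥B) := by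
  obtain ⟨e1⟩ := equiv_quot hN hA1 hA2
  obtain ⟨e2⟩ := equiv_quot hN hB1 hB2
  exact ⟨e1.trans e2.symm⟩

/-- Central involutions. -/
def Z2 (G : Type*) [Group G] : Subgroup G where
  carrier := {x | x ∈ Subgroup.center G ∧ x ^ 2 = 1}
  one_mem' := ⟨Subgroup.one_mem _, one_pow 2⟩
  mul_mem' := by
    rintro a b ⟨ha, ha2⟩ ⟨hb, hb2⟩
    refine ⟨mul_mem ha hb, ?_⟩
    have hca := Subgroup.mem_center_iff.1 ha b
    calc (a * b) ^ 2 = a * (b * a) * b := by rw [pow_two]; group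
      _ = a * (a * b) * b := by rw [hca]
      _ = a ^ 2 * b ^ 2 := by rw [pow_two, pow_two]; group
      _ = 1 := by rw [ha2, hb2, one_mul]
  inv_mem' := by
    rintro a ⟨ha, ha2⟩
    exact ⟨inv_mem ha, by rw [inv_pow, ha2, inv_one]⟩

lemma mem_Z2 {x : G} : x ∈ Z2 G ↔ x ∈ Subgroup.center G ∧ x ^ 2 = 1 := Iff.rfl

variable {E₀ H₀ : Subgroup G}

lemma decomp_central (d : IsDirectProdDecomp E₀ H₀) (he : IsElemAb2 ↥E₀) : E₀ ≤ Z2 G := by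
  obtain ⟨hEn, hHn, hdisj, hsup⟩ := d
  intro x hx
  refine ⟨Subgroup.mem_center_iff.2 fun g => ?_, ?_⟩
  · obtain ⟨e, heE, h, hh, rfl⟩ := mem_mul_decomp hHn hsup g
    have h1 : x * e = e * x := by
      simpa using congrArg Subtype.val (he.2 ⟨x, hx⟩ ⟨e, heE⟩)
    have h2 : x * h = h * x :=
      Subgroup.commute_of_normal_of_disjoint E₀ H₀ hEn hHn hdisj x h hx hh
    calc (e * h) * x = e * (x * h) := by rw [mul_assoc, ← h2]
      _ = (e * x) * h := by rw [mul_assoc]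
      _ = (x * e) * h := by rw [← h1]
      _ = x * (e * h) := by rw [mul_assoc]
  · simpa using congrArg Subtype.val (he.1 ⟨x, hx⟩)

lemma sq_le_map (d : IsDirectProdDecomp E₀ H₀) (he : IsElemAb2 ↥E₀) :
    Sq G ≤ (Sq ↥H₀).map H₀.subtype := by
  apply sq_le
  intro g
  obtain ⟨e, heE, h, hh, rfl⟩ := mem_mul_decomp d.2.1 d.2.2.2 g
  have hcen := decomp_central d he heE
  have hEq : (e * h) ^ 2 = h ^ 2 := by
    have hc := Subgroup.mem_center_iff.1 hcen.1 h
    calc (e * h) ^ 2 = e * (h * e) * h := by rw [pow_two]; group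
      _ = e * (e * h) * h := by rw [hc]
      _ = e ^ 2 * h ^ 2 := by rw [pow_two, pow_two]; group
      _ = h ^ 2 := by rw [hcen.2, one_mul]
  rw [hEq]
  exact ⟨(⟨h, hh⟩ : ↥H₀) ^ 2, sq_mem _, by simp⟩

lemma map_sq_le (H₀ : Subgroup G) : (Sq ↥H₀).map H₀.subtype ≤ Sq G := by
  rw [Subgroup.map_le_iff_le_comap]
  apply sq_le
  intro y
  rw [Subgroup.mem_comap]
  show ((y ^ 2 : ↥H₀) : G) ∈ Sq G
  rw [SubgroupClass.coe_pow]
  exact sq_mem _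

end C2FreeAux

open C2FreeAux in
/-- **Lemma 2.3**: every group is the direct product of an elementary abelian 2-group `E`
and a group `H` with no direct factor of order 2, and any two such decompositions have
isomorphic corresponding factors. -/
theorem exists_unique_C2free_decomp (G : Type*) [Group G] :
    ∃ E H : Subgroup G, IsDirectProdDecomp E H ∧ IsElemAb2 E ∧ ¬ HasC2DirectFactor H ∧
      ∀ E₁ H₁ : Subgroup G, IsDirectProdDecomp E₁ H₁ → IsElemAb2 E₁ →
        ¬ HasC2DirectFactor H₁ → Nonempty (E₁ ≃* E) ∧ Nonempty (H₁ ≃* H) := by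
  classical
  set S := Sq G with hS
  set V := Z2 G with hV
  have hVsq : ∀ x : ↥V, x ^ 2 = 1 := by
    intro x
    refine Subtype.ext ?_
    simpa using x.2.2
  obtain ⟨Ev, hEv1, hEv2⟩ := exists_compl hVsq ((V ⊓ S).subgroupOf V)
  set E := Ev.map V.subtype with hE
  have hEV : E ≤ V := Subgroup.map_subtype_le Ev
  -- E ⊓ S = ⊥
  have hES : E ⊓ S = ⊥ := by
    rw [eq_bot_iff]
    intro x hx
    rw [Subgroup.mem_inf] at hx
    obtain ⟨hxE, hxS⟩ := hx
    obtain ⟨x', hx', rfl⟩ := hxE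
    have hw : x' ∈ (V ⊓ S).subgroupOf V := by
      rw [Subgroup.mem_subgroupOf]
      exact Subgroup.mem_inf.2 ⟨x'.2, hxS⟩
    have hm : x' ∈ Ev ⊓ (V ⊓ S).subgroupOf V := Subgroup.mem_inf.2 ⟨hx', hw⟩
    rw [hEv1, Subgroup.mem_bot] at hm
    rw [hm]
    simp
  -- every element of V is a product e * w with e ∈ E, w ∈ V ⊓ S
  have hVsup : ∀ v ∈ V, ∃ e ∈ E, ∃ w ∈ V ⊓ S, e * w = v := by
    intro v hv
    have hmem : (⟨v, hv⟩ : ↥V) ∈ (↑(Ev ⊔ (V ⊓ S).subgroupOf V) : Set ↥V) := by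
      rw [hEv2]; exact Subgroup.mem_top _
    haveI : ((V ⊓ S).subgroupOf V).Normal := normal_all (comm_of_sq_one hVsq) _
    rw [Subgroup.mul_normal] at hmem
    obtain ⟨a, ha, b, hb, hEq⟩ := Set.mem_mul.1 hmem
    have hb' : b ∈ (V ⊓ S).subgroupOf V := hb
    rw [Subgroup.mem_subgroupOf] at hb'
    have ha' : a ∈ Ev := ha
    refine ⟨↑a, ⟨a, ha', rfl⟩, ↑b, hb', ?_⟩
    exact congrArg Subtype.val hEq
  -- quotient by S
  have hQsq : ∀ x : G ⧸ S, x ^ 2 = 1 := by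
    intro x
    refine QuotientGroup.induction_on x fun g => ?_
    have h : ((g : G ⧸ S)) ^ 2 = ((g ^ 2 : G) : G ⧸ S) := rfl
    rw [h, QuotientGroup.eq_one_iff]
    exact sq_mem g
  set π := QuotientGroup.mk' S with hπ
  obtain ⟨Kb, hKb1, hKb2⟩ := exists_compl hQsq (E.map π)
  set H := Kb.comap π with hH
  have hSH : S ≤ H := by
    intro s hs
    rw [Subgroup.mem_comap]
    have : π s = 1 := (QuotientGroup.eq_one_iff s).2 hs
    rw [this]
    exact Kb.one_mem
  have hEnormal : E.Normal := by
    constructor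
    intro n hn g
    have hcen := Subgroup.mem_center_iff.1 (hEV hn).1
    have h : g * n * g⁻¹ = n := by rw [hcen g]; group
    rw [h]; exact hn
  haveI hKbn : Kb.Normal := normal_all (comm_of_sq_one hQsq) Kb
  have hHnormal : H.Normal := hKbn.comap π
  have hEH : E ⊓ H = ⊥ := by
    rw [eq_bot_iff]
    intro x hx
    rw [Subgroup.mem_inf] at hx
    obtain ⟨hxE, hxH⟩ := hx
    rw [Subgroup.mem_comap] at hxH
    have hmem : π x ∈ Kb ⊓ E.map π :=
      Subgroup.mem_inf.2 ⟨hxH, Subgroup.mem_map.2 ⟨x, hxE, rfl⟩⟩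
    rw [hKb1, Subgroup.mem_bot] at hmem
    have hxS : x ∈ S := (QuotientGroup.eq_one_iff x).1 hmem
    have hm : x ∈ E ⊓ S := Subgroup.mem_inf.2 ⟨hxE, hxS⟩
    rwa [hES] at hm
  have hEHsup : E ⊔ H = ⊤ := by
    rw [eq_top_iff]
    intro g _
    have hg : π g ∈ (↑(Kb ⊔ E.map π) : Set (G ⧸ S)) := by simp [hKb2]
    haveI : (E.map π).Normal := normal_all (comm_of_sq_one hQsq) _
    rw [Subgroup.mul_normal] at hg
    obtain ⟨k, hk, eb, heb, hEq⟩ := Set.mem_mul.1 hg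
    obtain ⟨e, heE, rfl⟩ := heb
    have h1 : g * e⁻¹ ∈ H := by
      rw [Subgroup.mem_comap, map_mul, map_inv]
      have : π g * (π e)⁻¹ = k := by rw [← hEq]; group
      rw [this]; exact hk
    have h2 : (g * e⁻¹) * e = g := by group
    rw [← h2]
    exact mul_mem ((le_sup_right : H ≤ E ⊔ H) h1) ((le_sup_left : E ≤ E ⊔ H) heE)
  have hdecomp : IsDirectProdDecomp E H :=
    ⟨hEnormal, hHnormal, disjoint_iff.2 hEH, hEHsup⟩
  have helem : IsElemAb2 ↥E := by
    constructor
    · intro x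
      refine Subtype.ext ?_
      simpa using (hEV x.2).2
    · intro x y
      refine Subtype.ext ?_
      have := Subgroup.mem_center_iff.1 (hEV x.2).1 ↑y
      simpa using this.symm
  -- key: elements of V ⊓ H lie in S
  have hVHS : ∀ z ∈ V, z ∈ H → z ∈ S := by
    intro z hzV hzH
    obtain ⟨e, heE, w, hwVS, hEq⟩ := hVsup z hzV
    have hwH : w ∈ H := hSH hwVS.2
    have heH : e ∈ H := by
      have : e = z * w⁻¹ := by rw [← hEq]; group
      rw [this]
      exact mul_mem hzH (inv_mem hwH)
    have hm : e ∈ E ⊓ H := Subgroup.mem_inf.2 ⟨heE, heH⟩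
    rw [hEH, Subgroup.mem_bot] at hm
    rw [← hEq, hm, one_mul]
    exact hwVS.2
  have hnoC2 : ¬ HasC2DirectFactor ↥H := by
    apply no_c2
    intro zh hzhc hzh2
    set z := (zh : G) with hz
    have hz2 : z ^ 2 = 1 := by simpa using congrArg Subtype.val hzh2
    have hzcen : z ∈ Subgroup.center G := by
      rw [Subgroup.mem_center_iff]
      intro g
      obtain ⟨e, heE, h, hh, rfl⟩ := mem_mul_decomp hHnormal hEHsup g
      have h1 : z * e = e * z := Subgroup.mem_center_iff.1 (hEV heE).1 z
      have h2 : h * z = z * h := by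
        simpa using congrArg Subtype.val (Subgroup.mem_center_iff.1 hzhc ⟨h, hh⟩)
      calc (e * h) * z = e * (h * z) := by rw [mul_assoc]
        _ = (e * z) * h := by rw [h2, ← mul_assoc]
        _ = (z * e) * h := by rw [← h1]
        _ = z * (e * h) := by rw [mul_assoc]
    have hzS : z ∈ S := hVHS z (mem_Z2.2 ⟨hzcen, hz2⟩) zh.2
    have hle : S ≤ (Sq ↥H).map H.subtype := sq_le_map hdecomp helem
    obtain ⟨y, hy, hyz⟩ := hle hzS
    have : y = zh := Subtype.ext hyz
    rwa [this] at hy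
  refine ⟨E, H, hdecomp, helem, hnoC2, ?_⟩
  rintro E₁ H₁ d₁ he₁ hno₁
  have hE1V : E₁ ≤ V := decomp_central d₁ he₁
  have hSle1 : S ≤ (Sq ↥H₁).map H₁.subtype := sq_le_map d₁ he₁
  have hmap1 : (Sq ↥H₁).map H₁.subtype ≤ S := map_sq_le H₁
  have hSH1 : S ≤ H₁ := le_trans hSle1 (Subgroup.map_subtype_le _)
  -- central involutions inside H₁ lie in S
  have hcent1 : ∀ z ∈ V, z ∈ H₁ → z ∈ S := by
    intro z hzV hzH1
    have h1 : (⟨z, hzH1⟩ : ↥H₁) ∈ Subgroup.center ↥H₁ := by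
      rw [Subgroup.mem_center_iff]
      intro k
      refine Subtype.ext ?_
      have := Subgroup.mem_center_iff.1 hzV.1 ↑k
      simpa using this
    have h2 : (⟨z, hzH1⟩ : ↥H₁) ^ 2 = 1 := by
      refine Subtype.ext ?_
      simpa using hzV.2
    have h3 := mem_sq_of_no_c2 hno₁ h1 h2
    exact hmap1 ⟨_, h3, rfl⟩
  have hE1Hmeet : E₁ ⊓ H = ⊥ := by
    rw [eq_bot_iff]
    intro x hx
    rw [Subgroup.mem_inf] at hx
    obtain ⟨hxE1, hxH⟩ := hx
    have hxS : x ∈ S := hVHS x (hE1V hxE1) hxH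
    have hm : x ∈ E₁ ⊓ H₁ := Subgroup.mem_inf.2 ⟨hxE1, hSH1 hxS⟩
    rwa [disjoint_iff.1 d₁.2.2.1] at hm
  have hE1Hjoin : E₁ ⊔ H = ⊤ := by
    rw [eq_top_iff, ← hEHsup]
    refine sup_le ?_ le_sup_right
    intro e0 he0
    obtain ⟨e₁, he₁E, h₁, hh₁, hEq⟩ := mem_mul_decomp d₁.2.1 d₁.2.2.2 e0
    have hh₁V : h₁ ∈ V := by
      have : h₁ = e₁⁻¹ * e0 := by rw [← hEq]; group
      rw [this]
      exact mul_mem (inv_mem (hE1V he₁E)) (hEV he0)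
    have hh₁S : h₁ ∈ S := hcent1 h₁ hh₁V hh₁
    rw [← hEq]
    exact mul_mem ((le_sup_left : E₁ ≤ E₁ ⊔ H) he₁E)
      ((le_sup_right : H ≤ E₁ ⊔ H) (hSH hh₁S))
  have hH1Emeet : H₁ ⊓ E = ⊥ := by
    rw [eq_bot_iff]
    intro x hx
    rw [Subgroup.mem_inf] at hx
    obtain ⟨hxH1, hxE⟩ := hx
    have hxS : x ∈ S := hcent1 x (hEV hxE) hxH1
    have hm : x ∈ E ⊓ S := Subgroup.mem_inf.2 ⟨hxE, hxS⟩
    rwa [hES] at hm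
  have hH1Ejoin : H₁ ⊔ E = ⊤ := by
    rw [eq_top_iff, ← d₁.2.2.2]
    refine sup_le ?_ le_sup_left
    intro e₁ he₁E
    obtain ⟨e, heE, w, hwVS, hEq⟩ := hVsup e₁ (hE1V he₁E)
    rw [← hEq]
    exact mul_mem ((le_sup_right : E ≤ H₁ ⊔ E) heE)
      ((le_sup_left : H₁ ≤ H₁ ⊔ E) (hSH1 hwVS.2))
  constructor
  · exact equiv_of_compl hHnormal hE1Hmeet hE1Hjoin hEH hEHsup
  · refine equiv_of_compl hEnormal hH1Emeet hH1Ejoin ?_ ?_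
    · rw [inf_comm]; exact hEH
    · rw [sup_comm]; exact hEHsup
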